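/- Let E be a finite-dimensional real inner product space, let 1 ≤ q < ∞ be a real number, and define ⟨z⟩_q := ((1 + ‖z‖²)^{1/2} − 1)^q for z ∈ E. Then there exists a constant L_q > 0 such that |⟨z⟩_q − ⟨z'⟩_q| ≤ L_q (1 + ‖z‖ + ‖z'‖)^{q−1} ‖z − z'‖ for all z, z' ∈ E. -/
import Mathlib

open Real

private lemma rpow_sub_rpow_le_aux {q a b : ℝ} (hq : 1 ≤ q) (hb : 0 ≤ b) (hba : b ≤ a) :
    a ^ q - b ^ q ≤ q * a ^ (q - 1) * (a - b) := by
  rcases eq_or_lt_of_le hba with rfl | hlt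
  · simp
  obtain ⟨c, hc, hc'⟩ := exists_hasDerivAt_eq_slope (fun x => x ^ q)
    (fun x => q * x ^ (q - 1)) hlt
    (fun x _ => (Real.hasDerivAt_rpow_const (p := q) (Or.inr hq)).continuousAt.continuousWithinAt)
    (fun x _ => Real.hasDerivAt_rpow_const (Or.inr hq))
  have hc0 : 0 ≤ c := le_trans hb hc.1.le
  have hca : c ≤ a := hc.2.le
  rw [eq_div_iff (by linarith : a - b ≠ 0)] at hc'
  have hcq : c ^ (q - 1) ≤ a ^ (q - 1) := Real.rpow_le_rpow hc0 hca (by linarith)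
  have hq0 : (0:ℝ) ≤ q := by linarith
  calc a ^ q - b ^ q = q * c ^ (q - 1) * (a - b) := hc'.symm
    _ ≤ q * a ^ (q - 1) * (a - b) :=
        mul_le_mul_of_nonneg_right (mul_le_mul_of_nonneg_left hcq hq0) (by linarith)

private lemma abs_rpow_sub_rpow_le {q a b : ℝ} (hq : 1 ≤ q) (ha : 0 ≤ a) (hb : 0 ≤ b) :
    |a ^ q - b ^ q| ≤ q * max a b ^ (q - 1) * |a - b| := by
  rcases le_total b a with h | h
  · rw [abs_of_nonneg (sub_nonneg.mpr (Real.rpow_le_rpow hb h (by linarith))),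
      abs_of_nonneg (sub_nonneg.mpr h), max_eq_left h]
    exact rpow_sub_rpow_le_aux hq hb h
  · rw [abs_sub_comm, abs_sub_comm a b,
      abs_of_nonneg (sub_nonneg.mpr (Real.rpow_le_rpow ha h (by linarith))),
      abs_of_nonneg (sub_nonneg.mpr h), max_eq_right h]
    exact rpow_sub_rpow_le_aux hq ha h

private lemma sqrt_one_add_sq_lipschitz {s t : ℝ} (hs : 0 ≤ s) (ht : 0 ≤ t) :
    |Real.sqrt (1 + s ^ 2) - Real.sqrt (1 + t ^ 2)| ≤ |s - t| := by
  have key : ∀ x y : ℝ, 0 ≤ x → 0 ≤ y →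
      Real.sqrt (1 + x ^ 2) - Real.sqrt (1 + y ^ 2) ≤ |x - y| := by
    intro x y hx hy
    have h1 : Real.sqrt (1 + y ^ 2) ^ 2 = 1 + y ^ 2 := Real.sq_sqrt (by positivity)
    have h0 : 0 ≤ Real.sqrt (1 + y ^ 2) := Real.sqrt_nonneg _
    have hy' : y ≤ Real.sqrt (1 + y ^ 2) := by nlinarith
    have hsq : 1 + x ^ 2 ≤ (Real.sqrt (1 + y ^ 2) + |x - y|) ^ 2 := by
      have h2 : 0 ≤ |x - y| := abs_nonneg _
      rcases le_total y x with h | h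
      · rw [abs_of_nonneg (by linarith)]; nlinarith
      · rw [abs_of_nonpos (by linarith)]; nlinarith
    have h3 := Real.sqrt_le_sqrt hsq
    rw [Real.sqrt_sq (by positivity)] at h3
    linarith
  rcases le_total (Real.sqrt (1 + t ^ 2)) (Real.sqrt (1 + s ^ 2)) with h | h
  · rw [abs_of_nonneg (by linarith)]; exact key s t hs ht
  · rw [abs_of_nonpos (by linarith), neg_sub, abs_sub_comm]; exact key t s ht hs

/-- Lipschitz-type estimate (2.12) of the paper for `⟨z⟩_q = ((1+‖z‖²)^(1/2) - 1)^q`. -/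
theorem angle_q_lipschitz_type
    (E : Type*) [NormedAddCommGroup E] [InnerProductSpace ℝ E] [FiniteDimensional ℝ E]
    (q : ℝ) (hq : 1 ≤ q) :
    ∃ L : ℝ, 0 < L ∧ ∀ z z' : E,
      |(Real.sqrt (1 + ‖z‖ ^ 2) - 1) ^ q - (Real.sqrt (1 + ‖z'‖ ^ 2) - 1) ^ q|
        ≤ L * (1 + ‖z‖ + ‖z'‖) ^ (q - 1) * ‖z - z'‖ := by
  refine ⟨q, by linarith, fun z z' => ?_⟩
  set a := Real.sqrt (1 + ‖z‖ ^ 2) - 1 with ha_def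
  set b := Real.sqrt (1 + ‖z'‖ ^ 2) - 1 with hb_def
  have h1 : ∀ t : ℝ, 0 ≤ t → 1 ≤ Real.sqrt (1 + t ^ 2) := fun t ht => by
    have := Real.sqrt_le_sqrt (show (1:ℝ) ≤ 1 + t ^ 2 by nlinarith)
    simpa using this
  have h2 : ∀ t : ℝ, 0 ≤ t → Real.sqrt (1 + t ^ 2) ≤ 1 + t := fun t ht => by
    have := Real.sqrt_le_sqrt (show (1 + t ^ 2 : ℝ) ≤ (1 + t) ^ 2 by nlinarith)
    rwa [Real.sqrt_sq (by linarith)] at this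
  have ha : 0 ≤ a := by have := h1 ‖z‖ (norm_nonneg z); linarith [ha_def]
  have hb : 0 ≤ b := by have := h1 ‖z'‖ (norm_nonneg z'); linarith [hb_def]
  have haz : a ≤ ‖z‖ := by have := h2 ‖z‖ (norm_nonneg z); linarith [ha_def]
  have hbz : b ≤ ‖z'‖ := by have := h2 ‖z'‖ (norm_nonneg z'); linarith [hb_def]
  have hmax : max a b ≤ 1 + ‖z‖ + ‖z'‖ := by
    have := norm_nonneg z; have := norm_nonneg z'
    apply max_le <;> linarith
  have hq0 : (0:ℝ) ≤ q := by linarith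
  have hab : |a - b| ≤ ‖z - z'‖ := by
    have h3 : a - b = Real.sqrt (1 + ‖z‖ ^ 2) - Real.sqrt (1 + ‖z'‖ ^ 2) := by
      rw [ha_def, hb_def]; ring
    rw [h3]
    exact le_trans (sqrt_one_add_sq_lipschitz (norm_nonneg z) (norm_nonneg z'))
      (abs_norm_sub_norm_le z z')
  have hpow : max a b ^ (q - 1) ≤ (1 + ‖z‖ + ‖z'‖) ^ (q - 1) :=
    Real.rpow_le_rpow (le_max_of_le_left ha) hmax (by linarith)
  calc |a ^ q - b ^ q| ≤ q * max a b ^ (q - 1) * |a - b| :=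
        abs_rpow_sub_rpow_le hq ha hb
    _ ≤ q * (1 + ‖z‖ + ‖z'‖) ^ (q - 1) * ‖z - z'‖ :=
        mul_le_mul (mul_le_mul_of_nonneg_left hpow hq0) hab (abs_nonneg _)
          (mul_nonneg hq0 (Real.rpow_nonneg (by positivity) _))
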